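/- arXiv:1207.6664 — 4 statements merged into one kernel-verified Lean document; each statement's English description precedes it below -/
import Mathlib

section
/- Let $E,F$ be Banach spaces (over the real or complex field), $1<p<\infty$, $1/p+1/p^*=1$, and $T:E\to F$ a bounded linear operator. The following are equivalent: (i) for every sequence $(x_i)_{i=1}^\infty$ in $E$ with $\sum_{i=1}^\infty\|x_i\|^p<\infty$, the sequence $(T(x_i))_{i=1}^\infty$ is Cohen strongly $p$-summing in $F$; (ii) there exists $C>0$ such that $\sum_{i=1}^m |\varphi_i(T(x_i))| \le C\,(\sum_{i=1}^m\|x_i\|^p)^{1/p}\,\|(\varphi_i)_{i=1}^m\|_{w,p^*}$ for all $m\in\mathbb{N}$, all $x_1,\dots,x_m\in E$ and all $\varphi_1,\dots,\varphi_m\in F'$. -/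
open scoped BigOperators

/-- The weak `q`-norm of a finite family of continuous linear functionals on `F`:
`sup_{y ∈ B_F} (∑ i ‖φ i y‖^q)^(1/q)`. -/
noncomputable def weakNorm {𝕜 F : Type*} [RCLike 𝕜] [NormedAddCommGroup F] [NormedSpace 𝕜 F]
    {ι : Type*} [Fintype ι] (q : ℝ) (φ : ι → F →L[𝕜] 𝕜) : ℝ :=
  ⨆ y : Metric.closedBall (0 : F) 1, (∑ i, ‖φ i (y : F)‖ ^ q) ^ (1 / q)

section Aux
variable {𝕜 F : Type*} [RCLike 𝕜] [NormedAddCommGroup F] [NormedSpace 𝕜 F]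
    {ι : Type*} [Fintype ι] {q : ℝ}

instance : Nonempty (Metric.closedBall (0 : F) 1) :=
  ⟨⟨0, Metric.mem_closedBall_self zero_le_one⟩⟩

lemma weakNorm_nonneg (φ : ι → F →L[𝕜] 𝕜) : 0 ≤ weakNorm q φ :=
  Real.iSup_nonneg fun _ => Real.rpow_nonneg (Finset.sum_nonneg fun _ _ =>
    Real.rpow_nonneg (norm_nonneg _) _) _

lemma weakNorm_le (hq : 0 < q) (φ : ι → F →L[𝕜] 𝕜) {C : ℝ}
    (h : ∀ y ∈ Metric.closedBall (0 : F) 1, ∑ i, ‖φ i y‖ ^ q ≤ C) :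
    weakNorm q φ ≤ C ^ (1 / q) := by
  apply ciSup_le
  rintro ⟨y, hy⟩
  exact Real.rpow_le_rpow (Finset.sum_nonneg fun _ _ => Real.rpow_nonneg (norm_nonneg _) _)
    (h y hy) (by positivity)

lemma le_weakNorm (hq : 0 < q) (φ : ι → F →L[𝕜] 𝕜) {y : F}
    (hy : y ∈ Metric.closedBall (0 : F) 1) :
    (∑ i, ‖φ i y‖ ^ q) ^ (1 / q) ≤ weakNorm q φ := by
  have hb : BddAbove (Set.range fun y : Metric.closedBall (0 : F) 1 =>
      (∑ i, ‖φ i (y : F)‖ ^ q) ^ (1 / q)) := by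
    refine ⟨(∑ i, ‖φ i‖ ^ q) ^ (1 / q), ?_⟩
    rintro r ⟨⟨z, hz⟩, rfl⟩
    refine Real.rpow_le_rpow (Finset.sum_nonneg fun _ _ => Real.rpow_nonneg (norm_nonneg _) _)
      (Finset.sum_le_sum fun i _ => Real.rpow_le_rpow (norm_nonneg _) ?_ hq.le) (by positivity)
    calc ‖φ i z‖ ≤ ‖φ i‖ * ‖z‖ := (φ i).le_opNorm z
      _ ≤ ‖φ i‖ * 1 := by
          have : ‖z‖ ≤ 1 := by simpa [Metric.mem_closedBall] using hz
          exact mul_le_mul_of_nonneg_left this (norm_nonneg _)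
      _ = ‖φ i‖ := mul_one _
  exact le_ciSup hb ⟨y, hy⟩

lemma sum_le_weakNorm_rpow (hq : 0 < q) (φ : ι → F →L[𝕜] 𝕜) {y : F}
    (hy : y ∈ Metric.closedBall (0 : F) 1) :
    ∑ i, ‖φ i y‖ ^ q ≤ (weakNorm q φ) ^ q := by
  have h1 := le_weakNorm hq φ hy
  have hs : (0:ℝ) ≤ ∑ i, ‖φ i y‖ ^ q :=
    Finset.sum_nonneg fun _ _ => Real.rpow_nonneg (norm_nonneg _) _
  have h2 := Real.rpow_le_rpow (Real.rpow_nonneg hs _) h1 hq.le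
  rwa [← Real.rpow_mul hs, one_div_mul_cancel hq.ne', Real.rpow_one] at h2

end Aux

section Normalize
variable {𝕜 E F : Type*} [RCLike 𝕜]
    [NormedAddCommGroup E] [NormedSpace 𝕜 E]
    [NormedAddCommGroup F] [NormedSpace 𝕜 F]

lemma normalize_step (p q : ℝ) (hp : 1 < p) (hq : 1 / p + 1 / q = 1)
    (T : E →L[𝕜] F) (n : ℕ) {m : ℕ} {x : Fin m → E} {φ : Fin m → F →L[𝕜] 𝕜}
    (h : (4:ℝ)^n * (∑ i, ‖x i‖ ^ p) ^ (1/p) * weakNorm q φ < ∑ i, ‖φ i (T (x i))‖) :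
    ∃ (x' : Fin m → E) (φ' : Fin m → F →L[𝕜] 𝕜),
      (∑ i, ‖x' i‖ ^ p) = (1/2:ℝ)^n ∧
      (∀ y ∈ Metric.closedBall (0:F) 1, ∑ i, ‖φ' i y‖ ^ q ≤ (1/2:ℝ)^n) ∧
      (2:ℝ)^n < ∑ i, ‖φ' i (T (x' i))‖ := by
  have hp0 : (0:ℝ) < p := lt_trans one_pos hp
  have hq0 : (0:ℝ) < q := by
    have h1 : 1/p < 1 := by rw [div_lt_one hp0]; exact hp
    have h2 : 0 < 1/q := by linarith
    exact (one_div_pos).mp h2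
  -- S > 0
  have hSnn : (0:ℝ) ≤ (4:ℝ)^n * (∑ i, ‖x i‖ ^ p) ^ (1/p) * weakNorm q φ := by
    have := weakNorm_nonneg (q := q) φ
    positivity
  have hS : 0 < ∑ i, ‖φ i (T (x i))‖ := lt_of_le_of_lt hSnn h
  -- Sx > 0
  have hxnn : ∀ i ∈ Finset.univ, (0:ℝ) ≤ ‖x i‖ ^ p := fun i _ => Real.rpow_nonneg (norm_nonneg _) _
  have hSx : 0 < ∑ i, ‖x i‖ ^ p := by
    rcases (Finset.sum_nonneg hxnn).lt_or_eq with h' | h'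
    · exact h'
    · exfalso
      have hz : ∀ i, x i = 0 := by
        intro i
        have := (Finset.sum_eq_zero_iff_of_nonneg hxnn).mp h'.symm i (Finset.mem_univ i)
        have hx0 : ‖x i‖ = 0 := (Real.rpow_eq_zero (norm_nonneg _) hp0.ne').mp this
        exact norm_eq_zero.mp hx0
      have : ∑ i, ‖φ i (T (x i))‖ = 0 := Finset.sum_eq_zero fun i _ => by simp [hz i]
      rw [this] at hS; exact lt_irrefl 0 hS
  -- W > 0
  have hW : 0 < weakNorm q φ := by
    rcases (weakNorm_nonneg (q := q) φ).lt_or_eq with h' | h'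
    · exact h'
    · exfalso
      have hzero : ∀ (i : Fin m) (z : F), φ i z = 0 := by
        intro i z
        have key : ∀ y ∈ Metric.closedBall (0:F) 1, φ i y = 0 := by
          intro y hy
          have hb := sum_le_weakNorm_rpow hq0 φ hy
          rw [← h'] at hb
          rw [Real.zero_rpow hq0.ne'] at hb
          have h0 : ‖φ i y‖ ^ q ≤ 0 := by
            have := Finset.single_le_sum (f := fun j => ‖φ j y‖ ^ q)
              (fun j _ => Real.rpow_nonneg (norm_nonneg _) _) (Finset.mem_univ i)
            linarith
          have : ‖φ i y‖ ^ q = 0 :=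
            le_antisymm h0 (Real.rpow_nonneg (norm_nonneg _) _)
          have : ‖φ i y‖ = 0 := by
            by_contra hne
            have hpos : (0:ℝ) < ‖φ i y‖ := lt_of_le_of_ne (norm_nonneg _) (Ne.symm hne)
            have := Real.rpow_pos_of_pos hpos q
            linarith
          exact norm_eq_zero.mp this
        -- scale z into the ball
        set c : ℝ := (‖z‖ + 1)⁻¹ with hc
        have hc0 : 0 < c := by positivity
        have hmem : (c : 𝕜) • z ∈ Metric.closedBall (0:F) 1 := by
          simp only [Metric.mem_closedBall, dist_zero_right, norm_smul, RCLike.norm_ofReal,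
            abs_of_pos hc0]
          rw [hc, inv_mul_le_iff₀ (by positivity)]
          linarith [norm_nonneg z]
        have := key _ hmem
        rw [map_smul, smul_eq_mul] at this
        have hcne : ((c:ℝ) : 𝕜) ≠ 0 := by
          simp only [ne_eq, RCLike.ofReal_eq_zero]
          exact hc0.ne'
        exact (mul_eq_zero.mp this).resolve_left hcne
      have : ∑ i, ‖φ i (T (x i))‖ = 0 := Finset.sum_eq_zero fun i _ => by simp [hzero i]
      rw [this] at hS; exact lt_irrefl 0 hS
  -- scaling constants
  set A : ℝ := (∑ i, ‖x i‖ ^ p) ^ (1/p) with hA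
  have hApos : 0 < A := Real.rpow_pos_of_pos hSx _
  set W : ℝ := weakNorm q φ with hWdef
  set α : ℝ := A⁻¹ * ((2:ℝ) ^ ((n:ℝ)/p))⁻¹ with hα
  set β : ℝ := W⁻¹ * ((2:ℝ) ^ ((n:ℝ)/q))⁻¹ with hβ
  have hαpos : 0 < α := by positivity
  have hβpos : 0 < β := by positivity
  refine ⟨fun i => ((α:ℝ) : 𝕜) • x i, fun i => ((β:ℝ) : 𝕜) • φ i, ?_, ?_, ?_⟩
  · -- sum of p-th powers
    have hterm : ∀ i, ‖((α:ℝ):𝕜) • x i‖ ^ p = α ^ p * ‖x i‖ ^ p := by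
      intro i
      rw [norm_smul, RCLike.norm_ofReal, abs_of_pos hαpos,
        Real.mul_rpow hαpos.le (norm_nonneg _)]
    have hsum : ∑ i, ‖((α:ℝ):𝕜) • x i‖ ^ p = α ^ p * ∑ i, ‖x i‖ ^ p := by
      rw [Finset.mul_sum]; exact Finset.sum_congr rfl fun i _ => hterm i
    rw [hsum]
    have hAp : A ^ p = ∑ i, ‖x i‖ ^ p := by
      rw [hA, ← Real.rpow_mul hSx.le, one_div_mul_cancel hp0.ne', Real.rpow_one]
    have hBp : ((2:ℝ) ^ ((n:ℝ)/p)) ^ p = (2:ℝ)^n := by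
      rw [← Real.rpow_mul (by norm_num : (0:ℝ) ≤ 2), div_mul_cancel₀ _ hp0.ne',
        Real.rpow_natCast]
    have hαp : α ^ p = (∑ i, ‖x i‖ ^ p)⁻¹ * ((2:ℝ)^n)⁻¹ := by
      rw [hα, Real.mul_rpow (by positivity) (by positivity), Real.inv_rpow hApos.le,
        Real.inv_rpow (by positivity), hAp, hBp]
    rw [hαp]
    field_simp
    rw [← mul_pow]; norm_num
  · -- weak norm bound
    intro y hy
    have hterm : ∀ i, ‖(((β:ℝ):𝕜) • φ i) y‖ ^ q = β ^ q * ‖φ i y‖ ^ q := by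
      intro i
      rw [ContinuousLinearMap.smul_apply, norm_smul, RCLike.norm_ofReal, abs_of_pos hβpos,
        Real.mul_rpow hβpos.le (norm_nonneg _)]
    have hsum : ∑ i, ‖(((β:ℝ):𝕜) • φ i) y‖ ^ q = β ^ q * ∑ i, ‖φ i y‖ ^ q := by
      rw [Finset.mul_sum]; exact Finset.sum_congr rfl fun i _ => hterm i
    rw [hsum]
    have hb := sum_le_weakNorm_rpow hq0 φ hy
    have hBq : ((2:ℝ) ^ ((n:ℝ)/q)) ^ q = (2:ℝ)^n := by
      rw [← Real.rpow_mul (by norm_num : (0:ℝ) ≤ 2), div_mul_cancel₀ _ hq0.ne',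
        Real.rpow_natCast]
    have hβq : β ^ q = (W ^ q)⁻¹ * ((2:ℝ)^n)⁻¹ := by
      rw [hβ, Real.mul_rpow (by positivity) (by positivity), Real.inv_rpow hW.le,
        Real.inv_rpow (by positivity), hBq]
    rw [hβq]
    have hWq : 0 < W ^ q := Real.rpow_pos_of_pos hW _
    calc (W ^ q)⁻¹ * ((2:ℝ)^n)⁻¹ * ∑ i, ‖φ i y‖ ^ q
        ≤ (W ^ q)⁻¹ * ((2:ℝ)^n)⁻¹ * W ^ q := by
          apply mul_le_mul_of_nonneg_left hb; positivity
      _ = (1/2:ℝ)^n := by field_simp; rw [← mul_pow]; norm_num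
  · -- lower bound
    have hterm : ∀ i, ‖(((β:ℝ):𝕜) • φ i) (T (((α:ℝ):𝕜) • x i))‖ = α * β * ‖φ i (T (x i))‖ := by
      intro i
      rw [map_smul, ContinuousLinearMap.smul_apply, map_smul, smul_eq_mul, smul_eq_mul]
      rw [norm_mul, norm_mul, RCLike.norm_ofReal, RCLike.norm_ofReal,
        abs_of_pos hαpos, abs_of_pos hβpos]
      ring
    have hsum : ∑ i, ‖(((β:ℝ):𝕜) • φ i) (T (((α:ℝ):𝕜) • x i))‖
        = α * β * ∑ i, ‖φ i (T (x i))‖ := by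
      rw [Finset.mul_sum]; exact Finset.sum_congr rfl fun i _ => hterm i
    rw [hsum]
    have key : α * β * ((4:ℝ)^n * A * W) = (2:ℝ)^n := by
      have hnpq : (n:ℝ)/p + (n:ℝ)/q = (n:ℝ) := by
        calc (n:ℝ)/p + (n:ℝ)/q = (n:ℝ) * (1/p + 1/q) := by ring
          _ = (n:ℝ) := by rw [hq, mul_one]
      have h2 : (2:ℝ) ^ ((n:ℝ)/p) * (2:ℝ) ^ ((n:ℝ)/q) = (2:ℝ)^n := by
        rw [← Real.rpow_add (by norm_num : (0:ℝ) < 2), hnpq, Real.rpow_natCast]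
      have h4 : (4:ℝ)^n = (2:ℝ)^n * (2:ℝ)^n := by
        rw [← mul_pow]; norm_num
      have hexp : α * β * ((4:ℝ)^n * A * W)
          = (A⁻¹*A) * (W⁻¹*W) * (((2:ℝ) ^ ((n:ℝ)/p) * (2:ℝ) ^ ((n:ℝ)/q))⁻¹
            * ((2:ℝ)^n*(2:ℝ)^n)) := by
        rw [hα, hβ, h4, mul_inv]; ring
      rw [hexp, inv_mul_cancel₀ hApos.ne', inv_mul_cancel₀ hW.ne', h2]
      have h2n : ((2:ℝ)^n) ≠ 0 := by positivity
      field_simp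
    calc (2:ℝ)^n = α * β * ((4:ℝ)^n * A * W) := key.symm
      _ < α * β * ∑ i, ‖φ i (T (x i))‖ := by
          apply mul_lt_mul_of_pos_left h; positivity
end Normalize

/-- A bounded linear operator `T : E → F` maps absolutely `p`-summable sequences to
Cohen strongly `p`-summing sequences iff the Cohen summing inequality holds. -/
theorem stmt2 {𝕜 E F : Type*} [RCLike 𝕜]
    [NormedAddCommGroup E] [NormedSpace 𝕜 E] [CompleteSpace E]
    [NormedAddCommGroup F] [NormedSpace 𝕜 F] [CompleteSpace F]
    (p q : ℝ) (hp : 1 < p) (hq : 1 / p + 1 / q = 1) (T : E →L[𝕜] F) :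
    (∀ x : ℕ → E, Summable (fun i => ‖x i‖ ^ p) →
      ∀ φ : ℕ → F →L[𝕜] 𝕜,
        (∃ C : ℝ, ∀ y ∈ Metric.closedBall (0 : F) 1, ∀ s : Finset ℕ,
            ∑ i ∈ s, ‖φ i y‖ ^ q ≤ C) →
        Summable (fun i => ‖φ i (T (x i))‖))
    ↔ (∃ C > 0, ∀ (m : ℕ) (x : Fin m → E) (φ : Fin m → F →L[𝕜] 𝕜),
        ∑ i, ‖φ i (T (x i))‖ ≤ C * (∑ i, ‖x i‖ ^ p) ^ (1 / p) * weakNorm q φ) := by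
  classical
  have hp0 : (0:ℝ) < p := lt_trans one_pos hp
  have hq0 : (0:ℝ) < q := by
    have h1 : 1/p < 1 := by rw [div_lt_one hp0]; exact hp
    have h2 : 0 < 1/q := by linarith
    exact (one_div_pos).mp h2
  constructor
  · -- forward direction
    intro h1
    by_contra h2
    push_neg at h2
    have h3 : ∀ n : ℕ, ∃ (m : ℕ) (x' : Fin m → E) (φ' : Fin m → F →L[𝕜] 𝕜),
        (∑ i, ‖x' i‖ ^ p) = (1/2:ℝ)^n ∧
        (∀ y ∈ Metric.closedBall (0:F) 1, ∑ i, ‖φ' i y‖ ^ q ≤ (1/2:ℝ)^n) ∧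
        (2:ℝ)^n < ∑ i, ‖φ' i (T (x' i))‖ := by
      intro n
      obtain ⟨m, x, φ, hlt⟩ := h2 ((4:ℝ)^n) (by positivity)
      obtain ⟨x', φ', h⟩ := normalize_step p q hp hq T n hlt
      exact ⟨m, x', φ', h⟩
    choose m X Φ hX hΦ hlow using h3
    set d : ℕ ≃ ℕ × ℕ := (Denumerable.eqv (ℕ × ℕ)).symm with hd
    set x : ℕ → E := fun k =>
      if h : (d k).2 < m (d k).1 then X (d k).1 ⟨(d k).2, h⟩ else 0 with hxdef
    set φ : ℕ → F →L[𝕜] 𝕜 := fun k =>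
      if h : (d k).2 < m (d k).1 then Φ (d k).1 ⟨(d k).2, h⟩ else 0 with hφdef
    -- summability of ‖x k‖^p
    have hxs : Summable (fun k => ‖x k‖ ^ p) := by
      rw [← Equiv.summable_iff d.symm]
      have heq : ((fun k => ‖x k‖ ^ p) ∘ d.symm) = fun nn : ℕ × ℕ =>
          if h : nn.2 < m nn.1 then ‖X nn.1 ⟨nn.2, h⟩‖ ^ p else 0 := by
        funext nn
        simp only [Function.comp_apply, hxdef]
        rw [Equiv.apply_symm_apply]
        by_cases h : nn.2 < m nn.1
        · rw [dif_pos h, dif_pos h]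
        · rw [dif_neg h, dif_neg h, norm_zero, Real.zero_rpow hp0.ne']
      rw [heq]
      have hnn : ∀ nn : ℕ × ℕ,
          (0:ℝ) ≤ if h : nn.2 < m nn.1 then ‖X nn.1 ⟨nn.2, h⟩‖ ^ p else 0 := by
        intro nn
        by_cases h : nn.2 < m nn.1
        · rw [dif_pos h]; exact Real.rpow_nonneg (norm_nonneg _) _
        · rw [dif_neg h]
      rw [summable_prod_of_nonneg (Pi.le_def.mpr hnn)]
      constructor
      · intro n
        apply summable_of_ne_finset_zero (s := Finset.range (m n))
        intro i hi
        simp only [Finset.mem_range, not_lt] at hi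
        exact dif_neg (show ¬((n, i).2 < m (n, i).1) from not_lt.mpr hi)
      · have hrow : ∀ n : ℕ, (∑' i : ℕ,
            if h : i < m n then ‖X n ⟨i, h⟩‖ ^ p else 0) = (1/2:ℝ)^n := by
          intro n
          rw [tsum_eq_sum (s := Finset.range (m n))
            (fun i hi => dif_neg (by simp only [Finset.mem_range, not_lt] at hi; omega))]
          rw [← Fin.sum_univ_eq_sum_range (fun i => if h : i < m n then ‖X n ⟨i, h⟩‖ ^ p else 0)]
          rw [← hX n]
          exact Finset.sum_congr rfl fun j _ => by rw [dif_pos j.isLt]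
        exact Summable.congr (summable_geometric_two) (fun n => (hrow n).symm)
    -- weak q-summability bound for φ
    have hφb : ∀ y ∈ Metric.closedBall (0:F) 1, ∀ s : Finset ℕ,
        ∑ k ∈ s, ‖φ k y‖ ^ q ≤ 2 := by
      intro y hy s
      set g : ℕ × ℕ → ℝ := fun nn =>
        if h : nn.2 < m nn.1 then ‖Φ nn.1 ⟨nn.2, h⟩ y‖ ^ q else 0 with hg
      have hgnn : ∀ nn, 0 ≤ g nn := by
        intro nn
        by_cases h : nn.2 < m nn.1
        · rw [hg]; dsimp only; rw [dif_pos h]; exact Real.rpow_nonneg (norm_nonneg _) _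
        · rw [hg]; dsimp only; rw [dif_neg h]
      have hterm : ∀ k, ‖φ k y‖ ^ q = g (d k) := by
        intro k
        rw [hφdef, hg]
        dsimp only
        by_cases h : (d k).2 < m (d k).1
        · rw [dif_pos h, dif_pos h]
        · rw [dif_neg h, dif_neg h]
          simp [Real.zero_rpow hq0.ne']
      rw [Finset.sum_congr rfl (fun k _ => hterm k),
        ← Finset.sum_image (g := d) (fun a _ b _ hab => d.injective hab)]
      set N : ℕ := ((s.image d).image Prod.fst).sup id + 1 with hN
      set M : ℕ := ((s.image d).image Prod.snd).sup id + 1 with hM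
      have hsub : s.image d ⊆ Finset.range N ×ˢ Finset.range M := by
        intro nn hnn
        rw [Finset.mem_product, Finset.mem_range, Finset.mem_range]
        constructor
        · have : nn.1 ≤ ((s.image d).image Prod.fst).sup id :=
            Finset.le_sup (f := id) (Finset.mem_image_of_mem _ hnn)
          omega
        · have : nn.2 ≤ ((s.image d).image Prod.snd).sup id :=
            Finset.le_sup (f := id) (Finset.mem_image_of_mem _ hnn)
          omega
      calc ∑ nn ∈ s.image d, g nn
          ≤ ∑ nn ∈ Finset.range N ×ˢ Finset.range M, g nn :=
            Finset.sum_le_sum_of_subset_of_nonneg hsub (fun nn _ _ => hgnn nn)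
        _ = ∑ n ∈ Finset.range N, ∑ i ∈ Finset.range M, g (n, i) := Finset.sum_product _ _ _
        _ ≤ ∑ n ∈ Finset.range N, (1/2:ℝ)^n := by
            apply Finset.sum_le_sum
            intro n _
            calc ∑ i ∈ Finset.range M, g (n, i)
                ≤ ∑ i ∈ Finset.range (m n), g (n, i) := by
                  rw [← Finset.sum_filter_of_ne
                    (p := fun i => i < m n) (fun i _ hne => by
                      by_contra hc
                      exact hne (dif_neg hc))]
                  apply Finset.sum_le_sum_of_subset_of_nonneg
                  · intro i hi
                    rw [Finset.mem_filter] at hi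
                    exact Finset.mem_range.mpr hi.2
                  · intro nn _ _; exact hgnn _
              _ = ∑ j : Fin (m n), ‖Φ n j y‖ ^ q := by
                  rw [← Fin.sum_univ_eq_sum_range (fun i => g (n, i))]
                  exact Finset.sum_congr rfl fun j _ => by
                    show g (n, (j:ℕ)) = _
                    rw [hg]; dsimp only; rw [dif_pos j.isLt]
              _ ≤ (1/2:ℝ)^n := hΦ n y hy
        _ ≤ 2 := sum_geometric_two_le N
    -- apply h1 and derive contradiction
    have hsumm := h1 x hxs φ ⟨2, hφb⟩
    set S : ℝ := ∑' k, ‖φ k (T (x k))‖ with hS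
    have block : ∀ n : ℕ, (2:ℝ)^n < S := by
      intro n
      have hinj : ∀ a ∈ Finset.range (m n), ∀ b ∈ Finset.range (m n),
          d.symm (n, a) = d.symm (n, b) → a = b := by
        intro a _ b _ hab
        have := d.symm.injective hab
        exact (Prod.mk.injEq _ _ _ _).mp this |>.2
      have hblock : ∑ k ∈ (Finset.range (m n)).image (fun i => d.symm (n, i)),
          ‖φ k (T (x k))‖ = ∑ j : Fin (m n), ‖Φ n j (T (X n j))‖ := by
        rw [Finset.sum_image hinj,
          ← Fin.sum_univ_eq_sum_range (fun i => ‖φ (d.symm (n, i)) (T (x (d.symm (n, i))))‖)]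
        apply Finset.sum_congr rfl
        intro j _
        have hdk : d (d.symm (n, (j:ℕ))) = (n, (j:ℕ)) := d.apply_symm_apply _
        rw [hφdef, hxdef]
        dsimp only
        rw [hdk]
        rw [dif_pos j.isLt, dif_pos j.isLt]
      calc (2:ℝ)^n < ∑ j : Fin (m n), ‖Φ n j (T (X n j))‖ := hlow n
        _ = ∑ k ∈ (Finset.range (m n)).image (fun i => d.symm (n, i)),
            ‖φ k (T (x k))‖ := hblock.symm
        _ ≤ S := hsumm.sum_le_tsum _ (fun k _ => norm_nonneg _)
    obtain ⟨n, hn⟩ := exists_nat_gt S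
    have h2n : (n:ℝ) < (2:ℝ)^n := by exact_mod_cast (Nat.lt_two_pow_self (n := n))
    linarith [block n]
  · -- backward direction
    rintro ⟨C, hC, hineq⟩ x hx φ ⟨C', hC'⟩
    have hC'0 : (0:ℝ) ≤ C' := by
      simpa using hC' 0 (Metric.mem_closedBall_self zero_le_one) ∅
    have htnn : (0:ℝ) ≤ ∑' i, ‖x i‖ ^ p :=
      tsum_nonneg fun i => Real.rpow_nonneg (norm_nonneg _) _
    apply summable_of_sum_le (c := C * (∑' i, ‖x i‖ ^ p) ^ (1/p) * C' ^ (1/q))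
      (fun i => norm_nonneg _)
    intro s
    have key : ∀ f : ℕ → ℝ, ∑ j : Fin s.card, f ((s.equivFin.symm j : ℕ)) = ∑ i ∈ s, f i := by
      intro f
      rw [Equiv.sum_comp s.equivFin.symm (fun a : s => f a), Finset.sum_coe_sort]
    have h1 : (∑ j : Fin s.card, ‖x (s.equivFin.symm j : ℕ)‖ ^ p) ^ (1/p)
        ≤ (∑' i, ‖x i‖ ^ p) ^ (1/p) := by
      apply Real.rpow_le_rpow (Finset.sum_nonneg fun _ _ => Real.rpow_nonneg (norm_nonneg _) _)
        _ (by positivity)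
      rw [key (fun i => ‖x i‖ ^ p)]
      exact hx.sum_le_tsum s (fun i _ => Real.rpow_nonneg (norm_nonneg _) _)
    have h2 : weakNorm q (fun j : Fin s.card => φ (s.equivFin.symm j : ℕ)) ≤ C' ^ (1/q) := by
      apply weakNorm_le hq0
      intro y hy
      rw [key (fun i => ‖φ i y‖ ^ q)]
      exact hC' y hy s
    calc ∑ i ∈ s, ‖φ i (T (x i))‖
        = ∑ j : Fin s.card, ‖φ (s.equivFin.symm j : ℕ) (T (x (s.equivFin.symm j : ℕ)))‖ :=
          (key (fun i => ‖φ i (T (x i))‖)).symm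
      _ ≤ C * (∑ j : Fin s.card, ‖x (s.equivFin.symm j : ℕ)‖ ^ p) ^ (1/p)
          * weakNorm q (fun j : Fin s.card => φ (s.equivFin.symm j : ℕ)) := hineq _ _ _
      _ ≤ C * (∑' i, ‖x i‖ ^ p) ^ (1/p) * C' ^ (1/q) := by
          apply mul_le_mul (mul_le_mul le_rfl h1
            (Real.rpow_nonneg (Finset.sum_nonneg fun _ _ =>
              Real.rpow_nonneg (norm_nonneg _) _) _) hC.le) h2 (weakNorm_nonneg _)
            (mul_nonneg hC.le (Real.rpow_nonneg htnn _))
end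

section
/- Let $X_1,\dots,X_n,Y$ be Banach spaces (over the real or complex field), $1<p<\infty$, $1/p+1/p^*=1$, and $T:X_1\times\cdots\times X_n\to Y$ a bounded $n$-linear operator. The following are equivalent: (i) there exists $C>0$ such that $\sum_{i=1}^m|\varphi_i(T(x_i^{(1)},\dots,x_i^{(n)}))|\le C\,(\sum_{i=1}^m\prod_{j=1}^n\|x_i^{(j)}\|^{p})^{1/p}\,\|(\varphi_i)_{i=1}^m\|_{w,p^*}$ for all $m\in\mathbb{N}$, all $x_i^{(j)}\in X_j$ and all $\varphi_i\in Y'$; (ii) there exists $C>0$ such that $\sum_{i=1}^m|\varphi_i(T(x_i^{(1)},\dots,x_i^{(n)}))|\le C\,\prod_{j=1}^n(\sum_{i=1}^m\|x_i^{(j)}\|^{np})^{1/(np)}\,\|(\varphi_i)_{i=1}^m\|_{w,p^*}$ for all $m\in\mathbb{N}$, all $x_i^{(j)}\in X_j$ and all $\varphi_i\in Y'$. -/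
open scoped BigOperators

open MeasureTheory in
/-- Generalized Hölder for `n` functions with equal exponents `n`. -/
private lemma holder_aux {n m : ℕ} (hn : 0 < n) (f : Fin n → Fin m → ℝ)
    (hf : ∀ j i, 0 ≤ f j i) :
    ∑ i, ∏ j, f j i ≤ ∏ j, (∑ i, f j i ^ (n : ℝ)) ^ (1 / (n : ℝ)) := by
  have hn' : (n : ℝ) ≠ 0 := Nat.cast_ne_zero.2 hn.ne'
  have key := ENNReal.lintegral_prod_norm_pow_le (μ := Measure.count (α := Fin m))
    (Finset.univ (α := Fin n))
    (f := fun j i => ENNReal.ofReal (f j i ^ (n : ℝ)))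
    (fun j _ => (measurable_of_countable _).aemeasurable)
    (p := fun _ => 1 / (n : ℝ)) (by simp [hn']) (fun j _ => by positivity)
  have hL : (∫⁻ a, ∏ j, ENNReal.ofReal (f j a ^ (n : ℝ)) ^ (1 / (n : ℝ))
        ∂(Measure.count (α := Fin m)))
      = ENNReal.ofReal (∑ i, ∏ j, f j i) := by
    rw [MeasureTheory.lintegral_count, tsum_fintype,
      ENNReal.ofReal_sum_of_nonneg (fun i _ => Finset.prod_nonneg fun j _ => hf j i)]
    refine Finset.sum_congr rfl fun i _ => ?_
    rw [ENNReal.ofReal_prod_of_nonneg (fun j _ => hf j i)]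
    refine Finset.prod_congr rfl fun j _ => ?_
    rw [← ENNReal.ofReal_rpow_of_nonneg (hf j i) (by positivity : (0:ℝ) ≤ (n:ℝ)),
      ← ENNReal.rpow_mul, mul_one_div_cancel hn', ENNReal.rpow_one]
  have hR : ∏ j, (∫⁻ a, ENNReal.ofReal (f j a ^ (n : ℝ))
        ∂(Measure.count (α := Fin m))) ^ (1 / (n : ℝ))
      = ENNReal.ofReal (∏ j, (∑ i, f j i ^ (n : ℝ)) ^ (1 / (n : ℝ))) := by
    rw [ENNReal.ofReal_prod_of_nonneg (fun j _ => Real.rpow_nonneg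
      (Finset.sum_nonneg fun i _ => Real.rpow_nonneg (hf j i) _) _)]
    refine Finset.prod_congr rfl fun j _ => ?_
    rw [MeasureTheory.lintegral_count, tsum_fintype,
      ← ENNReal.ofReal_sum_of_nonneg (fun i _ => Real.rpow_nonneg (hf j i) _),
      ENNReal.ofReal_rpow_of_nonneg
        (Finset.sum_nonneg fun i _ => Real.rpow_nonneg (hf j i) _) (by positivity)]
  rw [hL, hR] at key
  exact (ENNReal.ofReal_le_ofReal_iff (Finset.prod_nonneg fun j _ => Real.rpow_nonneg
    (Finset.sum_nonneg fun i _ => Real.rpow_nonneg (hf j i) _) _)).1 key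

/-- For a bounded `n`-linear operator `T : X₁ × ⋯ × Xₙ → Y`, the Cohen summing inequality
with `(∑ᵢ ∏ⱼ ‖xᵢ⁽ʲ⁾‖^p)^(1/p)` holds for some constant iff the inequality with
`∏ⱼ (∑ᵢ ‖xᵢ⁽ʲ⁾‖^(np))^(1/(np))` holds for some constant. -/
theorem stmt5 {𝕜 : Type*} [RCLike 𝕜] {n : ℕ} (hn : 0 < n)
    {X : Fin n → Type*} [∀ j, NormedAddCommGroup (X j)] [∀ j, NormedSpace 𝕜 (X j)]
    [∀ j, CompleteSpace (X j)]
    {Y : Type*} [NormedAddCommGroup Y] [NormedSpace 𝕜 Y] [CompleteSpace Y]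
    (p q : ℝ) (hp : 1 < p) (hq : 1 / p + 1 / q = 1)
    (T : ContinuousMultilinearMap 𝕜 X Y) :
    (∃ C > 0, ∀ (m : ℕ) (x : ∀ j, Fin m → X j) (φ : Fin m → Y →L[𝕜] 𝕜),
        ∑ i, ‖φ i (T (fun j => x j i))‖ ≤
          C * (∑ i, ∏ j, ‖x j i‖ ^ p) ^ (1 / p) * weakNorm q φ)
    ↔ (∃ C > 0, ∀ (m : ℕ) (x : ∀ j, Fin m → X j) (φ : Fin m → Y →L[𝕜] 𝕜),
        ∑ i, ‖φ i (T (fun j => x j i))‖ ≤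
          C * (∏ j, (∑ i, ‖x j i‖ ^ ((n : ℝ) * p)) ^ (1 / ((n : ℝ) * p)))
            * weakNorm q φ) := by
  have hn' : (n : ℝ) ≠ 0 := Nat.cast_ne_zero.2 hn.ne'
  have hp0 : (0 : ℝ) < p := lt_trans one_pos hp
  constructor
  · rintro ⟨C, hC, H⟩
    refine ⟨C, hC, fun m x φ => ?_⟩
    refine (H m x φ).trans ?_
    have hW : 0 ≤ weakNorm q φ := Real.iSup_nonneg fun y => by positivity
    have hmid : (∑ i, ∏ j, ‖x j i‖ ^ p) ^ (1 / p)
        ≤ ∏ j, (∑ i, ‖x j i‖ ^ ((n : ℝ) * p)) ^ (1 / ((n : ℝ) * p)) := by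
      calc (∑ i, ∏ j, ‖x j i‖ ^ p) ^ (1 / p)
          ≤ (∏ j, (∑ i, (‖x j i‖ ^ p) ^ (n : ℝ)) ^ (1 / (n : ℝ))) ^ (1 / p) :=
            Real.rpow_le_rpow (by positivity)
              (holder_aux hn _ (fun j i => by positivity)) (by positivity)
        _ = ∏ j, (∑ i, ‖x j i‖ ^ ((n : ℝ) * p)) ^ (1 / ((n : ℝ) * p)) := by
            rw [← Real.finset_prod_rpow _ _ (fun j _ => by positivity) (1 / p)]
            refine Finset.prod_congr rfl fun j _ => ?_
            rw [← Real.rpow_mul (by positivity)]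
            have h1 : ∀ i : Fin m, (‖x j i‖ ^ p) ^ (n : ℝ) = ‖x j i‖ ^ ((n : ℝ) * p) := by
              intro i
              rw [← Real.rpow_mul (norm_nonneg _), mul_comm]
            simp_rw [h1]
            congr 1
            field_simp
    exact mul_le_mul_of_nonneg_right (mul_le_mul_of_nonneg_left hmid hC.le) hW
  · rintro ⟨C, hC, H⟩
    refine ⟨C, hC, fun m x φ => ?_⟩
    set a : Fin m → ℝ := fun i => ∏ j, ‖x j i‖ with ha
    have ha0 : ∀ i, 0 ≤ a i := fun i => Finset.prod_nonneg fun j _ => norm_nonneg _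
    set c : Fin n → Fin m → ℝ :=
      fun j i => if ‖x j i‖ = 0 then 0 else a i ^ (1 / (n : ℝ)) / ‖x j i‖ with hcdef
    have hc0 : ∀ j i, 0 ≤ c j i := by
      intro j i
      by_cases h : ‖x j i‖ = 0 <;> simp [hcdef, h]
      positivity
    set x' : ∀ j, Fin m → X j := fun j i => ((c j i : ℝ) : 𝕜) • x j i with hx'
    -- norms of the rescaled vectors
    have hnorm : ∀ j i, ‖x' j i‖ = a i ^ (1 / (n : ℝ)) := by
      intro j i
      by_cases h : ‖x j i‖ = 0
      · have hai : a i = 0 :=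
          Finset.prod_eq_zero (Finset.mem_univ j) h
        have hc : c j i = 0 := by simp [hcdef, h]
        show ‖((c j i : ℝ) : 𝕜) • x j i‖ = a i ^ (1 / (n : ℝ))
        rw [hc, hai, Real.zero_rpow (one_div_ne_zero hn')]
        simp
      · rw [hx', norm_smul, RCLike.norm_ofReal, abs_of_nonneg (hc0 j i)]
        simp only [hcdef, h, if_false]
        rw [div_mul_cancel₀ _ h]
    -- values are unchanged
    have hval : ∀ i, ‖φ i (T fun j => x' j i)‖ = ‖φ i (T fun j => x j i)‖ := by
      intro i
      by_cases h : ∀ j, ‖x j i‖ ≠ 0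
      · have hsm : (fun j => x' j i) = fun j => ((c j i : ℝ) : 𝕜) • x j i := rfl
        rw [hsm, T.map_smul_univ]
        have hprod : ∏ j, c j i = 1 := by
          have hai : 0 < a i := Finset.prod_pos fun j _ =>
            lt_of_le_of_ne (norm_nonneg _) (Ne.symm (h j))
          have : ∏ j, c j i = (∏ j : Fin n, a i ^ (1 / (n : ℝ))) / ∏ j, ‖x j i‖ := by
            rw [← Finset.prod_div_distrib]
            exact Finset.prod_congr rfl fun j _ => by simp [hcdef, h j]
          rw [this, Finset.prod_const, Finset.card_univ, Fintype.card_fin,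
            ← Real.rpow_natCast (a i ^ (1 / (n : ℝ))) n, ← Real.rpow_mul (ha0 i),
            one_div_mul_cancel hn', Real.rpow_one]
          exact div_self hai.ne'
        have : (∏ j, ((c j i : ℝ) : 𝕜)) = 1 := by
          rw [← RCLike.ofReal_prod, hprod, RCLike.ofReal_one]
        rw [this, one_smul]
      · push_neg at h
        obtain ⟨j₀, hj₀⟩ := h
        have hx0 : x j₀ i = 0 := norm_eq_zero.1 hj₀
        have h1 : T (fun j => x j i) = 0 := T.map_coord_zero j₀ hx0
        have h2 : T (fun j => x' j i) = 0 :=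
          T.map_coord_zero j₀ (by simp [hx', hx0])
        simp [h1, h2]
    have key := H m x' φ
    simp_rw [hval] at key
    refine key.trans (le_of_eq ?_)
    congr 2
    -- the RHS product for x' equals the single-sum expression
    have hsum : ∀ j : Fin n, ∑ i, ‖x' j i‖ ^ ((n : ℝ) * p) = ∑ i, ∏ j', ‖x j' i‖ ^ p := by
      intro j
      refine Finset.sum_congr rfl fun i _ => ?_
      rw [hnorm j i, ← Real.rpow_mul (ha0 i)]
      have : 1 / (n : ℝ) * ((n : ℝ) * p) = p := by field_simp
      rw [this, ha, ← Real.finset_prod_rpow _ _ (fun j' _ => norm_nonneg _) p]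
    simp_rw [hsum]
    rw [Finset.prod_const, Finset.card_univ, Fintype.card_fin,
      ← Real.rpow_natCast ((∑ i, ∏ j, ‖x j i‖ ^ p) ^ (1 / ((n : ℝ) * p))) n,
      ← Real.rpow_mul (by positivity : (0:ℝ) ≤ ∑ i, ∏ j, ‖x j i‖ ^ p)]
    congr 1
    field_simp
end

section
/- Let $E_1,\dots,E_n,F$ be Banach spaces (over the real or complex field), $1<p<\infty$, $1/p+1/p^*=1$, and $T:E_1\times\cdots\times E_n\to F$ a bounded $n$-linear operator. If $T$ is Cohen strongly $p$-summing with constant $C$, then $T$ is multiple Cohen strongly $p$-summing with the same constant $C$. Consequently every Cohen strongly $p$-summing $n$-linear operator is multiple Cohen strongly $p$-summing and $\|T\|_{mCoh,p}\le\|T\|_{Coh,p}$. -/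
open scoped BigOperators

/-- `T` is Cohen strongly `p`-summing with constant `C`. -/
def CohIneq (𝕜 : Type*) [RCLike 𝕜] {n : ℕ} {E : Fin n → Type*}
    [∀ k, NormedAddCommGroup (E k)] [∀ k, NormedSpace 𝕜 (E k)]
    {F : Type*} [NormedAddCommGroup F] [NormedSpace 𝕜 F]
    (p q : ℝ) (T : (∀ k, E k) → F) (C : ℝ) : Prop :=
  ∀ (m : ℕ) (x : ∀ k, Fin m → E k) (φ : Fin m → F →L[𝕜] 𝕜),
    ∑ i, ‖φ i (T (fun k => x k i))‖ ≤
      C * (∑ i, ∏ k, ‖x k i‖ ^ p) ^ (1 / p) * weakNorm q φ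

/-- `T` is multiple Cohen strongly `p`-summing with constant `C`. -/
def MCohIneq (𝕜 : Type*) [RCLike 𝕜] {n : ℕ} {E : Fin n → Type*}
    [∀ k, NormedAddCommGroup (E k)] [∀ k, NormedSpace 𝕜 (E k)]
    {F : Type*} [NormedAddCommGroup F] [NormedSpace 𝕜 F]
    (p q : ℝ) (T : (∀ k, E k) → F) (C : ℝ) : Prop :=
  ∀ (m : ℕ) (x : ∀ k, Fin m → E k) (φ : (Fin n → Fin m) → F →L[𝕜] 𝕜),
    ∑ α : Fin n → Fin m, ‖φ α (T (fun k => x k (α k)))‖ ≤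
      C * (∏ k, (∑ j, ‖x k j‖ ^ p) ^ (1 / p)) * weakNorm q φ

lemma coh_to_mcoh {𝕜 : Type*} [RCLike 𝕜] {n : ℕ}
    {E : Fin n → Type*} [∀ k, NormedAddCommGroup (E k)] [∀ k, NormedSpace 𝕜 (E k)]
    {F : Type*} [NormedAddCommGroup F] [NormedSpace 𝕜 F]
    (p q : ℝ) (hp : 1 < p)
    (T : (∀ k, E k) → F) (C : ℝ) (h : CohIneq 𝕜 p q T C) :
    MCohIneq 𝕜 p q T C := by
  intro m x φ
  set e : (Fin n → Fin m) ≃ Fin (Fintype.card (Fin n → Fin m)) := Fintype.equivFin _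
  have key := h (Fintype.card (Fin n → Fin m)) (fun k i => x k (e.symm i k))
      (fun i => φ (e.symm i))
  have hL : ∑ i, ‖(φ (e.symm i)) (T (fun k => x k (e.symm i k)))‖ =
      ∑ α : Fin n → Fin m, ‖φ α (T (fun k => x k (α k)))‖ :=
    Fintype.sum_equiv e.symm _ _ (fun i => rfl)
  have hS : (∑ i, ∏ k, ‖x k (e.symm i k)‖ ^ p) = ∏ k, ∑ j, ‖x k j‖ ^ p := by
    rw [Equiv.sum_comp e.symm (fun α : Fin n → Fin m => ∏ k, ‖x k (α k)‖ ^ p)]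
    rw [Finset.prod_univ_sum (fun _ => Finset.univ) (fun k j => ‖x k j‖ ^ p)]
    rw [Fintype.piFinset_univ]
  have hW : weakNorm q (fun i => φ (e.symm i)) = weakNorm q φ := by
    unfold weakNorm
    refine iSup_congr fun y => ?_
    rw [Equiv.sum_comp e.symm (fun α => ‖φ α (y : F)‖ ^ q)]
  rw [hL, hS, hW] at key
  calc ∑ α : Fin n → Fin m, ‖φ α (T (fun k => x k (α k)))‖
      ≤ C * (∏ k, ∑ j, ‖x k j‖ ^ p) ^ (1 / p) * weakNorm q φ := key
    _ = C * (∏ k, (∑ j, ‖x k j‖ ^ p) ^ (1 / p)) * weakNorm q φ := by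
        rw [← Real.finset_prod_rpow _ _ (fun k _ => Finset.sum_nonneg fun j _ =>
          Real.rpow_nonneg (norm_nonneg _) _) _]

/-- If a bounded `n`-linear operator `T` is Cohen strongly `p`-summing with constant `C`, then
it is multiple Cohen strongly `p`-summing with the same constant `C`; consequently
`‖T‖_{mCoh,p} ≤ ‖T‖_{Coh,p}`. -/
theorem stmt9 {𝕜 : Type*} [RCLike 𝕜] {n : ℕ} (hn : 0 < n)
    {E : Fin n → Type*} [∀ k, NormedAddCommGroup (E k)] [∀ k, NormedSpace 𝕜 (E k)]
    [∀ k, CompleteSpace (E k)]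
    {F : Type*} [NormedAddCommGroup F] [NormedSpace 𝕜 F] [CompleteSpace F]
    (p q : ℝ) (hp : 1 < p) (hq : 1 / p + 1 / q = 1)
    (T : ContinuousMultilinearMap 𝕜 E F) (C : ℝ) (hC : 0 < C)
    (h : CohIneq 𝕜 p q (⇑T) C) :
    MCohIneq 𝕜 p q (⇑T) C ∧
      sInf {D : ℝ | 0 ≤ D ∧ MCohIneq 𝕜 p q (⇑T) D} ≤
        sInf {D : ℝ | 0 ≤ D ∧ CohIneq 𝕜 p q (⇑T) D} := by
  refine ⟨coh_to_mcoh p q hp _ C h, ?_⟩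
  apply csInf_le_csInf
  · exact ⟨0, fun D hD => hD.1⟩
  · exact ⟨C, hC.le, h⟩
  · rintro D ⟨hD0, hDc⟩
    exact ⟨hD0, coh_to_mcoh p q hp _ D hDc⟩
end

section
/- Let $E,F$ be Banach spaces (over the real or complex field), $1<p<\infty$, $1/p+1/p^*=1$, and $n\ge 2$. Suppose $u:E\to F$ is a bounded linear operator that is not Cohen strongly $p$-summing, and let $\varphi\in E'$ with $\varphi\ne 0$. Then the bounded $n$-linear operator $\psi:E^n\to F$ defined by $\psi(x_1,\dots,x_n)=\varphi(x_1)\cdots\varphi(x_{n-1})\,u(x_n)$ is not multiple Cohen strongly $p$-summing. -/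
open scoped BigOperators

/-- If `u : E → F` is a bounded linear operator which is not Cohen strongly `p`-summing and
`φ ∈ E'` is nonzero, then the `(n+1)`-linear operator
`ψ(x₁,…,x_{n+1}) = φ(x₁)⋯φ(xₙ) u(x_{n+1})` (with `n + 1 ≥ 2`) is not multiple Cohen
strongly `p`-summing. -/
theorem stmt11 {𝕜 E F : Type*} [RCLike 𝕜]
    [NormedAddCommGroup E] [NormedSpace 𝕜 E] [CompleteSpace E]
    [NormedAddCommGroup F] [NormedSpace 𝕜 F] [CompleteSpace F]
    (p q : ℝ) (hp : 1 < p) (hq : 1 / p + 1 / q = 1)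
    {n : ℕ} (hn : 1 ≤ n)
    (u : E →L[𝕜] F)
    (hu : ¬ ∃ C > 0, ∀ (m : ℕ) (x : Fin m → E) (φ : Fin m → F →L[𝕜] 𝕜),
        ∑ i, ‖φ i (u (x i))‖ ≤ C * (∑ i, ‖x i‖ ^ p) ^ (1 / p) * weakNorm q φ)
    (φv : E →L[𝕜] 𝕜) (hφv : φv ≠ 0)
    (ψ : (Fin (n + 1) → E) → F)
    (hψ : ∀ x : Fin (n + 1) → E,
      ψ x = (∏ j : Fin n, φv (x j.castSucc)) • u (x (Fin.last n))) :
    ¬ ∃ C > 0, ∀ (m : ℕ) (x : Fin (n + 1) → Fin m → E)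
        (φ : (Fin (n + 1) → Fin m) → F →L[𝕜] 𝕜),
        ∑ α : Fin (n + 1) → Fin m, ‖φ α (ψ (fun k => x k (α k)))‖ ≤
          C * (∏ k, (∑ j, ‖x k j‖ ^ p) ^ (1 / p)) * weakNorm q φ := by
  classical
  rintro ⟨C, hC, hT⟩
  apply hu
  -- choose `a` with `φv a = 1`
  obtain ⟨b, hb⟩ : ∃ b, φv b ≠ 0 := by
    by_contra h
    push_neg at h
    exact hφv (ContinuousLinearMap.ext fun z => by simp [h z])
  set a : E := (φv b)⁻¹ • b with ha
  have hφa : φv a = 1 := by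
    simp [ha, map_smul, smul_eq_mul, inv_mul_cancel₀ hb]
  have ha0 : a ≠ 0 := by
    intro h; rw [h, map_zero] at hφa; exact one_ne_zero hφa.symm
  have hna : 0 < ‖a‖ := norm_pos_iff.mpr ha0
  have hp0 : (0:ℝ) < p := lt_trans one_pos hp
  have hq0 : (0:ℝ) < q := by
    have h1 : (0:ℝ) < 1 / q := by
      have : 1 / p < 1 := by
        rw [div_lt_one hp0]; exact hp
      linarith
    exact (one_div_pos).mp h1
  refine ⟨C * ‖a‖ ^ n, by positivity, ?_⟩
  intro m x φ
  rcases Nat.eq_zero_or_pos m with rfl | hm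
  · have h0 : (∑ i : Fin 0, ‖x i‖ ^ p) = 0 := by simp
    rw [h0, Real.zero_rpow (by positivity : (1:ℝ)/p ≠ 0)]
    simp
  haveI : NeZero m := ⟨hm.ne'⟩
  -- the extended data
  set X : Fin (n+1) → Fin m → E := fun k j =>
    if k = Fin.last n then x j else if j = 0 then a else 0 with hX
  set P : (Fin (n+1) → Fin m) → Prop := fun α => ∀ k : Fin n, α k.castSucc = 0 with hP
  set Φ : (Fin (n+1) → Fin m) → F →L[𝕜] 𝕜 := fun α =>
    if P α then φ (α (Fin.last n)) else 0 with hΦ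
  set e : Fin m → (Fin (n+1) → Fin m) := fun i k => if k = Fin.last n then i else 0 with he
  have hcast_ne : ∀ k : Fin n, k.castSucc ≠ Fin.last n := fun k =>
    ne_of_lt (Fin.castSucc_lt_last k)
  have hPe : ∀ i, P (e i) := by
    intro i k
    simp [he, hcast_ne k]
  have hfilter : Finset.univ.filter P = Finset.univ.image e := by
    ext α
    simp only [Finset.mem_filter, Finset.mem_univ, true_and, Finset.mem_image]
    constructor
    · intro hα
      refine ⟨α (Fin.last n), funext fun k => ?_⟩
      refine Fin.lastCases ?_ (fun j => ?_) k
      · simp [he]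
      · simp [he, hcast_ne j, hα j]
    · rintro ⟨i, rfl⟩
      exact hPe i
  have hinj : ∀ i ∈ (Finset.univ : Finset (Fin m)), ∀ i' ∈ Finset.univ,
      e i = e i' → i = i' := by
    intro i _ i' _ h
    have := congrFun h (Fin.last n)
    simpa [he] using this
  have key : ∀ g : Fin m → ℝ,
      (∑ α : Fin (n+1) → Fin m, if P α then g (α (Fin.last n)) else 0) = ∑ i, g i := by
    intro g
    rw [← Finset.sum_filter, hfilter, Finset.sum_image hinj]
    congr 1
    ext i
    simp [he]
  -- LHS
  have hLHS : ∑ α : Fin (n+1) → Fin m, ‖Φ α (ψ (fun k => X k (α k)))‖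
      = ∑ i, ‖φ i (u (x i))‖ := by
    rw [← key (fun i => ‖φ i (u (x i))‖)]
    refine Finset.sum_congr rfl fun α _ => ?_
    by_cases hα : P α
    · rw [if_pos hα]
      have hψα : ψ (fun k => X k (α k)) = u (x (α (Fin.last n))) := by
        rw [hψ]
        have h1 : ∀ j : Fin n, X j.castSucc (α j.castSucc) = a := by
          intro j
          simp [hX, hcast_ne j, hα j]
        have h2 : (∏ j : Fin n, φv (X j.castSucc (α j.castSucc))) = 1 := by
          rw [Finset.prod_congr rfl fun j _ => by rw [h1 j, hφa]]
          simp
        simp only [h2, one_smul]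
        congr 1
        simp [hX]
      simp only [hΦ, if_pos hα, hψα]
    · rw [if_neg hα]
      simp [hΦ, if_neg hα]
  -- weak norm
  have hW : weakNorm q Φ = weakNorm q φ := by
    unfold weakNorm
    refine iSup_congr fun y => ?_
    congr 1
    rw [← key (fun i => ‖φ i (y : F)‖ ^ q)]
    refine Finset.sum_congr rfl fun α _ => ?_
    by_cases hα : P α
    · simp only [hΦ, if_pos hα]
    · simp only [hΦ, if_neg hα]
      simp [Real.zero_rpow hq0.ne']
  -- product
  have hprod : (∏ k, (∑ j, ‖X k j‖ ^ p) ^ (1/p))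
      = ‖a‖ ^ n * (∑ j, ‖x j‖ ^ p) ^ (1/p) := by
    rw [Fin.prod_univ_castSucc]
    have h1 : ∀ k : Fin n, (∑ j, ‖X k.castSucc j‖ ^ p) = ‖a‖ ^ p := by
      intro k
      have : ∀ j : Fin m, ‖X k.castSucc j‖ ^ p = if j = 0 then ‖a‖ ^ p else 0 := by
        intro j
        by_cases hj : j = 0
        · simp [hX, hcast_ne k, hj]
        · simp [hX, hcast_ne k, hj, Real.zero_rpow hp0.ne']
      rw [Finset.sum_congr rfl fun j _ => this j]
      simp
    have h2 : ∀ k : Fin n, ((∑ j, ‖X k.castSucc j‖ ^ p) : ℝ) ^ (1/p) = ‖a‖ := by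
      intro k
      rw [h1 k, ← Real.rpow_mul (norm_nonneg a), mul_one_div_cancel hp0.ne', Real.rpow_one]
    rw [Finset.prod_congr rfl fun k _ => h2 k]
    have h3 : (∑ j, ‖X (Fin.last n) j‖ ^ p) = ∑ j, ‖x j‖ ^ p := by
      refine Finset.sum_congr rfl fun j _ => ?_
      simp [hX]
    rw [h3, Finset.prod_const]
    simp
  have := hT m X Φ
  rw [hLHS, hW, hprod] at this
  calc ∑ i, ‖φ i (u (x i))‖
      ≤ C * (‖a‖ ^ n * (∑ j, ‖x j‖ ^ p) ^ (1/p)) * weakNorm q φ := this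
    _ = C * ‖a‖ ^ n * (∑ i, ‖x i‖ ^ p) ^ (1/p) * weakNorm q φ := by ring
end
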